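/- Let H ∈ (1/2,1), a, b ∈ ℝ with a ≠ 0, and fix t > 0. Then the incremental variance of the completely correlated mixed fractional Brownian motion, which equals V(s) = a²(t−s) + a·b·∫_s^t K_H(t,u) du + b²(t−s)^{2H} for 0 < s < t, satisfies lim_{s→t⁻} V(s)/(a²(t−s)) = 1. Consequently the ccmfBm has Hölder index 1/2. -/

import Mathlib

open MeasureTheory Real Set Filter

/-- The normalizing constant `c(H)` of the Molchan–Golosov kernel. -/
noncomputable def cH (H : ℝ) : ℝ :=
  Real.sqrt (2 * H * Real.Gamma (3/2 - H) / (Real.Gamma (H + 1/2) * Real.Gamma (2 - 2*H)))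
    * (H - 1/2)

/-- The Molchan–Golosov kernel `K_H(t,s)`; it vanishes for `s ≥ t`. -/
noncomputable def KH (H t s : ℝ) : ℝ :=
  if s < t then
    cH H * s ^ (-(H - 1/2)) * ∫ u in s..t, u ^ (H - 1/2) * (u - s) ^ (H - 3/2)
  else 0

/-- The covariance function of fractional Brownian motion. -/
noncomputable def RH (H t s : ℝ) : ℝ :=
  (t ^ (2*H) + s ^ (2*H) - |t - s| ^ (2*H)) / 2

/-- Short-time behaviour of the ccmfBm: the incremental variance
`V(s) = a²(t−s) + ab∫_s^t K_H(t,u)du + b²(t−s)^{2H}` satisfies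
`V(s)/(a²(t−s)) → 1` as `s → t⁻` (through `s ∈ (0,t)`); hence the Hölder index is `1/2`. -/
lemma cH_nonneg {H : ℝ} (hH : (1:ℝ)/2 < H) : 0 ≤ cH H :=
  mul_nonneg (Real.sqrt_nonneg _) (by linarith)

lemma KH_nonneg {H t u : ℝ} (hH : (1:ℝ)/2 < H) (hu : 0 < u) : 0 ≤ KH H t u := by
  unfold KH
  split
  · next h =>
    refine mul_nonneg (mul_nonneg (cH_nonneg hH) (Real.rpow_nonneg hu.le _)) ?_
    refine intervalIntegral.integral_nonneg h.le fun v hv => ?_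
    exact mul_nonneg (Real.rpow_nonneg (by linarith [hv.1]) _)
      (Real.rpow_nonneg (by linarith [hv.1]) _)
  · exact le_refl 0

lemma inner_integral_le {H t u : ℝ} (hH : H ∈ Set.Ioo (1/2:ℝ) 1) (hu : 0 < u) (hut : u < t) :
    (∫ v in u..t, v ^ (H - 1/2) * (v - u) ^ (H - 3/2))
      ≤ t ^ (H - 1/2) * ((t - u) ^ (H - 1/2) / (H - 1/2)) := by
  obtain ⟨h1, h2⟩ := hH
  have hr : (0:ℝ) < H - 1/2 := by linarith
  have hint1 : IntervalIntegrable (fun v => (v - u) ^ (H - 3/2)) volume u t := by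
    have h0 := (intervalIntegral.intervalIntegrable_rpow' (a := 0) (b := t - u)
      (r := H - 3/2) (by linarith)).comp_sub_right u
    simpa using h0
  have hcont : ContinuousOn (fun v : ℝ => v ^ (H - 1/2)) (Set.uIcc u t) := by
    refine ContinuousOn.rpow_const continuousOn_id fun v hv => Or.inl ?_
    rw [Set.uIcc_of_le hut.le] at hv
    exact ne_of_gt (lt_of_lt_of_le hu hv.1)
  have hint2 : IntervalIntegrable (fun v => v ^ (H - 1/2) * (v - u) ^ (H - 3/2)) volume u t :=
    hint1.continuousOn_mul hcont
  calc (∫ v in u..t, v ^ (H - 1/2) * (v - u) ^ (H - 3/2))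
      ≤ ∫ v in u..t, t ^ (H - 1/2) * (v - u) ^ (H - 3/2) := by
        refine intervalIntegral.integral_mono_on hut.le hint2 (hint1.const_mul _) fun v hv => ?_
        refine mul_le_mul_of_nonneg_right ?_ (Real.rpow_nonneg (by linarith [hv.1]) _)
        exact Real.rpow_le_rpow (by linarith [hv.1]) hv.2 hr.le
    _ = t ^ (H - 1/2) * ((t - u) ^ (H - 1/2) / (H - 1/2)) := by
        rw [intervalIntegral.integral_const_mul]
        congr 1
        have h3 : (∫ v in u..t, (v - u) ^ (H - 3/2)) = ∫ x in (0:ℝ)..(t - u), x ^ (H - 3/2) := by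
          rw [intervalIntegral.integral_comp_sub_right (fun x => x ^ (H - 3/2)) u]
          norm_num
        rw [h3, integral_rpow (Or.inl (by linarith))]
        have he : H - 3/2 + 1 = H - 1/2 := by ring
        rw [he, Real.zero_rpow (ne_of_gt hr)]
        ring

lemma KH_le {H t u : ℝ} (hH : H ∈ Set.Ioo (1/2:ℝ) 1) (ht : 0 < t) (hu : t/2 < u)
    (hut : u < t) :
    KH H t u ≤ cH H * (t/2) ^ (-(H - 1/2)) * (t ^ (H - 1/2) * ((t - u) ^ (H - 1/2) / (H - 1/2))) := by
  have hu0 : 0 < u := lt_trans (half_pos ht) hu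
  have hr : (0:ℝ) < H - 1/2 := by linarith [hH.1]
  unfold KH
  rw [if_pos hut]
  have h1 := inner_integral_le hH hu0 hut
  have h2 : u ^ (-(H - 1/2)) ≤ (t/2) ^ (-(H - 1/2)) :=
    Real.rpow_le_rpow_of_nonpos (half_pos ht) hu.le (by linarith)
  have hInonneg : 0 ≤ ∫ v in u..t, v ^ (H - 1/2) * (v - u) ^ (H - 3/2) :=
    intervalIntegral.integral_nonneg hut.le fun v hv =>
      mul_nonneg (Real.rpow_nonneg (by linarith [hv.1]) _) (Real.rpow_nonneg (by linarith [hv.1]) _)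
  have hcH := cH_nonneg hH.1
  calc cH H * u ^ (-(H - 1/2)) * ∫ v in u..t, v ^ (H - 1/2) * (v - u) ^ (H - 3/2)
      ≤ cH H * (t/2) ^ (-(H - 1/2)) * ∫ v in u..t, v ^ (H - 1/2) * (v - u) ^ (H - 3/2) := by
        exact mul_le_mul_of_nonneg_right (mul_le_mul_of_nonneg_left h2 hcH) hInonneg
    _ ≤ _ := mul_le_mul_of_nonneg_left h1 (mul_nonneg hcH (Real.rpow_nonneg (by linarith) _))

lemma integral_KH_le {H t s : ℝ} (hH : H ∈ Set.Ioo (1/2:ℝ) 1) (ht : 0 < t) (hs : t/2 < s)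
    (hst : s < t) :
    |∫ u in s..t, KH H t u|
      ≤ (cH H * (t/2) ^ (-(H - 1/2)) * t ^ (H - 1/2) / (H - 1/2)) * (t - s) ^ (H - 1/2) * (t - s) := by
  have hr : (0:ℝ) < H - 1/2 := by linarith [hH.1]
  have key : ∀ u ∈ Set.uIoc s t, ‖KH H t u‖
      ≤ (cH H * (t/2) ^ (-(H - 1/2)) * t ^ (H - 1/2) / (H - 1/2)) * (t - s) ^ (H - 1/2) := by
    intro u hu
    rw [Set.uIoc_of_le hst.le] at hu
    have hu0 : 0 < u := lt_trans (half_pos ht) (lt_trans hs hu.1)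
    have hb0 : 0 ≤ (cH H * (t/2) ^ (-(H - 1/2)) * t ^ (H - 1/2) / (H - 1/2)) * (t - s) ^ (H - 1/2) := by
      refine mul_nonneg (div_nonneg (mul_nonneg (mul_nonneg (cH_nonneg hH.1)
        (Real.rpow_nonneg (by linarith) _)) (Real.rpow_nonneg ht.le _)) hr.le)
        (Real.rpow_nonneg (by linarith) _)
    rw [Real.norm_eq_abs, abs_of_nonneg (KH_nonneg hH.1 hu0)]
    rcases eq_or_lt_of_le hu.2 with h | h
    · rw [h]
      unfold KH
      rw [if_neg (lt_irrefl t)]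
      exact hb0
    · refine (KH_le hH ht (lt_trans hs hu.1) h).trans ?_
      have h3 : (t - u) ^ (H - 1/2) ≤ (t - s) ^ (H - 1/2) :=
        Real.rpow_le_rpow (by linarith [hu.1]) (by linarith [hu.1]) hr.le
      rw [div_eq_mul_inv, div_eq_mul_inv]
      calc cH H * (t/2) ^ (-(H - 1/2)) * (t ^ (H - 1/2) * ((t - u) ^ (H - 1/2) * (H - 1/2)⁻¹))
          ≤ cH H * (t/2) ^ (-(H - 1/2)) * (t ^ (H - 1/2) * ((t - s) ^ (H - 1/2) * (H - 1/2)⁻¹)) := by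
            refine mul_le_mul_of_nonneg_left (mul_le_mul_of_nonneg_left
              (mul_le_mul_of_nonneg_right h3 (by positivity)) (Real.rpow_nonneg ht.le _)) ?_
            exact mul_nonneg (cH_nonneg hH.1) (Real.rpow_nonneg (by linarith) _)
        _ = cH H * (t/2) ^ (-(H - 1/2)) * t ^ (H - 1/2) * (H - 1/2)⁻¹ * (t - s) ^ (H - 1/2) := by
            ring
  have := intervalIntegral.norm_integral_le_of_norm_le_const key
  rw [Real.norm_eq_abs] at this
  rwa [abs_of_nonneg (by linarith : (0:ℝ) ≤ t - s)] at this

theorem ccmfBm_incremental_variance_asymptotics (H a b t : ℝ)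
    (hH : H ∈ Set.Ioo (1/2 : ℝ) 1) (ha : a ≠ 0) (ht : 0 < t) :
    Filter.Tendsto
      (fun s => (a^2 * (t - s) + a * b * (∫ u in s..t, KH H t u) + b^2 * (t - s) ^ (2*H))
        / (a^2 * (t - s)))
      (nhdsWithin t (Set.Ioo 0 t)) (nhds 1) := by
  obtain ⟨hH1, hH2⟩ := hH
  have hr : (0:ℝ) < H - 1/2 := by linarith
  have ha2 : (0:ℝ) < a^2 := by positivity
  set C := cH H * (t/2) ^ (-(H - 1/2)) * t ^ (H - 1/2) / (H - 1/2) with hCdef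
  have hC0 : 0 ≤ C := div_nonneg (mul_nonneg (mul_nonneg (cH_nonneg hH1)
    (Real.rpow_nonneg (by linarith) _)) (Real.rpow_nonneg ht.le _)) hr.le
  have hmem : ∀ᶠ s in nhdsWithin t (Set.Ioo 0 t), s ∈ Set.Ioo (t/2) t := by
    filter_upwards [mem_nhdsWithin_of_mem_nhds (Ioi_mem_nhds (by linarith : t/2 < t)),
      self_mem_nhdsWithin] with s hs1 hs2
    exact ⟨hs1, hs2.2⟩
  have htend : Tendsto (fun s => t - s) (nhdsWithin t (Set.Ioo 0 t)) (nhds 0) := by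
    have h0 : Tendsto (fun s : ℝ => t - s) (nhds t) (nhds (t - t)) :=
      tendsto_const_nhds.sub tendsto_id
    simpa using h0.mono_left nhdsWithin_le_nhds
  have hpow : ∀ r : ℝ, 0 < r →
      Tendsto (fun s => (t - s) ^ r) (nhdsWithin t (Set.Ioo 0 t)) (nhds 0) := by
    intro r hr0
    have hc : ContinuousAt (fun x : ℝ => x ^ r) 0 :=
      Real.continuousAt_rpow_const 0 r (Or.inr hr0.le)
    have h0 := (hc.tendsto).comp htend
    simpa [Function.comp_def, Real.zero_rpow hr0.ne'] using h0
  have hzero : Tendsto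
      (fun s => (a * b * (∫ u in s..t, KH H t u) + b^2 * (t - s) ^ (2*H)) / (a^2 * (t - s)))
      (nhdsWithin t (Set.Ioo 0 t)) (nhds 0) := by
    refine squeeze_zero_norm' ?_ ?_
      (a := fun s => |a * b| * C / a^2 * (t - s) ^ (H - 1/2) + b^2 / a^2 * (t - s) ^ (2*H - 1))
    · filter_upwards [hmem] with s hs
      have hts : (0:ℝ) < t - s := by linarith [hs.2]
      have hD : (0:ℝ) < a^2 * (t - s) := by positivity
      have hI := integral_KH_le ⟨hH1, hH2⟩ ht hs.1 hs.2
      have hXeq : (t - s) ^ (2*H) = (t - s) ^ (2*H - 1) * (t - s) := by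
        nth_rewrite 1 [show 2*H = 2*H - 1 + 1 by ring]
        rw [Real.rpow_add_one (ne_of_gt hts)]
      have hnum : |a * b * (∫ u in s..t, KH H t u) + b^2 * (t - s) ^ (2*H)|
          ≤ |a * b| * (C * (t - s) ^ (H - 1/2) * (t - s)) + b^2 * ((t - s) ^ (2*H - 1) * (t - s)) := by
        refine (abs_add_le _ _).trans (add_le_add ?_ ?_)
        · rw [abs_mul]
          exact mul_le_mul_of_nonneg_left hI (abs_nonneg _)
        · rw [abs_mul, abs_of_nonneg (sq_nonneg b), abs_of_nonneg (Real.rpow_nonneg hts.le _), hXeq]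
      rw [Real.norm_eq_abs, abs_div, abs_of_pos hD, div_le_iff₀ hD]
      refine hnum.trans (le_of_eq ?_)
      field_simp
    · have h1 := ((hpow (H - 1/2) hr).const_mul (|a * b| * C / a^2))
      have h2 := ((hpow (2*H - 1) (by linarith)).const_mul (b^2 / a^2))
      simpa using h1.add h2
  have heq : ∀ᶠ s in nhdsWithin t (Set.Ioo 0 t),
      1 + (a * b * (∫ u in s..t, KH H t u) + b^2 * (t - s) ^ (2*H)) / (a^2 * (t - s))
        = (a^2 * (t - s) + a * b * (∫ u in s..t, KH H t u) + b^2 * (t - s) ^ (2*H))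
          / (a^2 * (t - s)) := by
    filter_upwards [hmem] with s hs
    have hts : (0:ℝ) < t - s := by linarith [hs.2]
    field_simp
    ring
  have hlim : Tendsto
      (fun s => 1 + (a * b * (∫ u in s..t, KH H t u) + b^2 * (t - s) ^ (2*H)) / (a^2 * (t - s)))
      (nhdsWithin t (Set.Ioo 0 t)) (nhds 1) := by
    simpa using tendsto_const_nhds.add hzero
  exact Filter.Tendsto.congr' heq hlim
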